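/- arXiv:2005.01300 — 2 statements merged into one kernel-verified Lean document; each statement's English description precedes it below -/
import Mathlib

section
/- Let K = Q(θ) where θ is a root of an irreducible polynomial x^n − a ∈ Z[x], n ≥ 2, a a nonzero integer. Let p be a prime dividing n with p ∤ a, write s = v_p(n) and n' = n/p^s, set θ' = θ^{n'} and K' = Q(θ'), so that K/K' is an extension of degree n'. Then p does not divide the absolute norm N_{K'/Q}(d_{K/K'}) of the relative discriminant ideal d_{K/K'} of K over K' (equivalently, p does not divide the absolute norm of the relative different ideal of O_K over O_{K'}). -/
set_option maxHeartbeats 1000000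


open Polynomial NumberField

/-- Let `K = ℚ(θ)` with `θ` a root of an irreducible polynomial `x^n - a ∈ ℤ[x]`, `n ≥ 2`.
Let `p` be a prime dividing `n` with `p ∤ a`, write `s = v_p(n)` and `n' = n/p^s`, and set
`θ' = θ^{n'}`, `K' = ℚ(θ')`, so that `K/K'` is an extension of degree `n'`.  Then `p` does
not divide the absolute norm of the relative discriminant of `K/K'`; equivalently, `p` does
not divide the absolute norm of the relative different ideal of `O_K` over `O_{K'}`. -/
theorem prime_not_dvd_absNorm_relative_different
    (K : Type*) [Field K] [NumberField K]
    (n : ℕ) (a : ℤ) (hn : 2 ≤ n) (ha : a ≠ 0)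
    (hirr : Irreducible (X ^ n - C a : ℤ[X]))
    (θ : K) (hθ : θ ^ n = (a : K))
    (hgen : Algebra.adjoin ℚ {θ} = ⊤)
    (p : ℕ) (hp : p.Prime) (hpn : p ∣ n) (hpa : ¬ (p : ℤ) ∣ a)
    (K' : IntermediateField ℚ K)
    (hK' : K' = IntermediateField.adjoin ℚ {θ ^ (n / p ^ padicValNat p n)}) :
    ¬ p ∣ Ideal.absNorm (differentIdeal (𝓞 ↥K') (𝓞 K)) := by
  have hn0 : n ≠ 0 := by omega
  set s := padicValNat p n with hs
  set m := n / p ^ s with hm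
  have hppow : p ^ s ∣ n := pow_padicValNat_dvd
  have hmul : m * p ^ s = n := Nat.div_mul_cancel hppow
  have hm0 : m ≠ 0 := by
    intro h; rw [h, zero_mul] at hmul; omega
  have hpm : ¬ p ∣ m := by
    intro hdvd
    haveI : Fact p.Prime := ⟨hp⟩
    obtain ⟨c, hc⟩ := hdvd
    have h2 : n = p ^ (s + 1) * c := by rw [← hmul, hc, pow_succ]; ring
    exact pow_succ_padicValNat_not_dvd (p := p) hn0 ⟨c, h2⟩
  -- θ is integral
  have hθint : IsIntegral ℤ θ := by
    refine ⟨X ^ n - C a, monic_X_pow_sub_C a hn0, ?_⟩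
    rw [eval₂_sub, eval₂_pow, eval₂_X, eval₂_C, hθ]
    simp
  set x : 𝓞 K := ⟨θ, hθint⟩ with hxdef
  -- θ^m lies in K' and is integral
  have hθ'mem : θ ^ m ∈ K' := by
    rw [hK']
    exact IntermediateField.subset_adjoin ℚ _ rfl
  have hy'int : IsIntegral ℤ (⟨θ ^ m, hθ'mem⟩ : K') := by
    rw [← isIntegral_algebraMap_iff (algebraMap ↥K' K).injective]
    exact hθint.pow m
  set y' : 𝓞 ↥K' := ⟨⟨θ ^ m, hθ'mem⟩, hy'int⟩ with hy'def
  have hxy : x ^ m = algebraMap (𝓞 ↥K') (𝓞 K) y' := by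
    apply NumberField.RingOfIntegers.ext
    push_cast [hxdef, hy'def]
    rfl
  -- the minimal polynomial of x over 𝓞 K' divides X^m - C y'
  have hxint' : IsIntegral (𝓞 ↥K') x :=
    (Algebra.IsIntegral.isIntegral (R := ℤ) x).tower_top
  have hmin : minpoly (𝓞 ↥K') x ∣ X ^ m - C y' := by
    apply minpoly.isIntegrallyClosed_dvd hxint'
    simp [hxy]
  obtain ⟨g, hg⟩ := hmin
  -- key: f'(x) divides m * x^(m-1)
  have hkey : (m : 𝓞 K) * x ^ (m - 1) =
      aeval x (derivative (minpoly (𝓞 ↥K') x)) * aeval x g := by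
    have hd := congrArg (fun q => aeval x (derivative q)) hg
    simp only [derivative_sub, derivative_X_pow, derivative_C, sub_zero, derivative_mul,
      map_add, map_mul, minpoly.aeval, zero_mul, add_zero] at hd
    simpa using hd
  -- the element m * x^(m-1) lies in the different ideal
  have hmem : (m : 𝓞 K) * x ^ (m - 1) ∈ differentIdeal (𝓞 ↥K') (𝓞 K) := by
    rw [hkey]
    apply Ideal.mul_mem_right
    apply aeval_derivative_mem_differentIdeal (𝓞 ↥K') ↥K' K
    -- Algebra.adjoin ↥K' {algebraMap (𝓞 K) K x} = ⊤
    rw [eq_top_iff]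
    intro z _
    have hz : z ∈ (⊤ : Subalgebra ℚ K) := trivial
    rw [← hgen] at hz
    have hsub : Algebra.adjoin ℚ {θ} ≤
        (Algebra.adjoin ↥K' {algebraMap (𝓞 K) K x}).restrictScalars ℚ := by
      apply Algebra.adjoin_le
      intro w hw
      rw [Set.mem_singleton_iff] at hw
      subst hw
      exact Algebra.subset_adjoin rfl
    exact hsub hz
  -- norm computations
  have hnormdvd : (Ideal.absNorm (differentIdeal (𝓞 ↥K') (𝓞 K)) : ℤ) ∣
      Algebra.norm ℤ ((m : 𝓞 K) * x ^ (m - 1)) :=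
    Ideal.absNorm_dvd_norm_of_mem hmem
  intro hcon
  set d := Fintype.card (Module.Free.ChooseBasisIndex ℤ (𝓞 K)) with hd
  have hbnorm : ∀ z : ℤ, Algebra.norm ℤ (algebraMap ℤ (𝓞 K) z) = z ^ d :=
    fun z => Algebra.norm_algebraMap_of_basis (Module.Free.chooseBasis ℤ (𝓞 K)) z
  have hnorm : Algebra.norm ℤ ((m : 𝓞 K) * x ^ (m - 1)) =
      (m : ℤ) ^ d * (Algebra.norm ℤ x) ^ (m - 1) := by
    rw [map_mul, map_pow, show ((m : ℕ) : 𝓞 K) = algebraMap ℤ (𝓞 K) (m : ℤ) from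
      (map_natCast _ m).symm, hbnorm]
  have hpdvd : (p : ℤ) ∣ (m : ℤ) ^ d * (Algebra.norm ℤ x) ^ (m - 1) := by
    rw [← hnorm]
    exact dvd_trans (Int.natCast_dvd_natCast.mpr hcon) hnormdvd
  have hpint : Prime (p : ℤ) := Nat.prime_iff_prime_int.1 hp
  rcases hpint.dvd_mul.mp hpdvd with h1 | h2
  · exact hpm (Int.natCast_dvd_natCast.mp (hpint.dvd_of_dvd_pow h1))
  · have hNx : (p : ℤ) ∣ Algebra.norm ℤ x := hpint.dvd_of_dvd_pow h2
    have hxn : x ^ n = algebraMap ℤ (𝓞 K) a := by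
      apply NumberField.RingOfIntegers.ext
      have h1 : ((x ^ n : 𝓞 K) : K) = θ ^ n := by push_cast [hxdef]; rfl
      rw [h1, hθ, NumberField.RingOfIntegers.coe_eq_algebraMap, ← IsScalarTower.algebraMap_apply]
      simp
    have : (p : ℤ) ∣ a ^ d := by
      calc (p : ℤ) ∣ (Algebra.norm ℤ x) ^ n := hNx.pow hn0
        _ = Algebra.norm ℤ (x ^ n) := (map_pow _ _ _).symm
        _ = a ^ d := by rw [hxn, hbnorm]
    exact hpa (hpint.dvd_of_dvd_pow this)
end

section
/- Let K = Q(θ) where θ is a root of an irreducible polynomial x^n − a ∈ Z[x], n ≥ 2, a a nonzero integer. If O_K = Z[θ], then a is squarefree. -/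
open Polynomial NumberField

/-- Let `K = ℚ(θ)` with `θ` a root of an irreducible polynomial `x^n - a ∈ ℤ[x]`, `n ≥ 2`.
If `O_K = ℤ[θ]`, then `a` is squarefree. -/
theorem squarefree_of_ringOfIntegers_eq_adjoin
    (K : Type*) [Field K] [NumberField K]
    (n : ℕ) (a : ℤ) (hn : 2 ≤ n) (ha : a ≠ 0)
    (hirr : Irreducible (X ^ n - C a : ℤ[X]))
    (θ : 𝓞 K) (hθ : θ ^ n = (a : 𝓞 K))
    (hgen : Algebra.adjoin ℚ {(θ : K)} = ⊤)
    (hmono : Algebra.adjoin ℤ {θ} = ⊤) :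
    Squarefree a := by
  by_contra hsf
  -- extract a prime p with p ^ 2 ∣ a
  obtain ⟨x, hxa, hxu⟩ := by
    simpa [Squarefree] using hsf
  have hx0 : x ≠ 0 := by
    rintro rfl
    exact ha (by simpa using hxa)
  obtain ⟨p, hp, hpx⟩ := Int.exists_prime_and_dvd (fun h => hxu (Int.isUnit_iff_natAbs_eq.mpr h))
  have hpa : p ^ 2 ∣ a := by
    calc p ^ 2 ∣ x * x := by
          rw [pow_two]; exact mul_dvd_mul hpx hpx
      _ ∣ a := hxa
  obtain ⟨b, hb⟩ := hpa
  have hn0 : n ≠ 0 := by omega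
  have hn1 : 0 < n := by omega
  have hp0 : (p : K) ≠ 0 := by exact_mod_cast hp.ne_zero
  -- the minimal polynomial of θ over ℤ is X ^ n - C a
  have hθint : IsIntegral ℤ θ := NumberField.RingOfIntegers.isIntegral θ
  have hmonic : (X ^ n - C a : ℤ[X]).Monic := monic_X_pow_sub_C a hn0
  have haev : aeval θ (X ^ n - C a : ℤ[X]) = 0 := by
    simp [hθ]
  have hdvd : minpoly ℤ θ ∣ (X ^ n - C a : ℤ[X]) :=
    minpoly.isIntegrallyClosed_dvd hθint haev
  have hminpoly : minpoly ℤ θ = X ^ n - C a := by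
    obtain ⟨q, hq⟩ := hdvd
    rcases hirr.isUnit_or_isUnit hq with h | h
    · exact absurd ((minpoly.monic hθint).eq_one_of_isUnit h) (minpoly.ne_one ℤ θ)
    · have : Associated (minpoly ℤ θ) (X ^ n - C a : ℤ[X]) :=
        hq ▸ associated_mul_unit_right _ q h
      exact eq_of_monic_of_associated (minpoly.monic hθint) hmonic this
  -- the element η = θ^(n-1) / p is integral
  set η : K := (θ : K) ^ (n - 1) / (p : K) with hηdef
  have hθK : (θ : K) ^ n = (a : K) := by
    have h := congrArg (algebraMap (𝓞 K) K) hθ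
    simpa using h
  have hηn : η ^ n = ((p ^ (n - 2) * b ^ (n - 1) : ℤ) : K) := by
    have h1 : η ^ n = ((θ : K) ^ n) ^ (n - 1) / (p : K) ^ n := by
      rw [hηdef, div_pow, ← pow_mul, ← pow_mul, Nat.mul_comm]
    rw [h1, hθK]
    have : (a : K) = (p : K) ^ 2 * (b : K) := by exact_mod_cast hb
    rw [this, mul_pow, ← pow_mul]
    have h2 : 2 * (n - 1) = n + (n - 2) := by omega
    rw [h2, pow_add]
    push_cast
    field_simp
  have hηint : IsIntegral ℤ η := by
    refine ⟨X ^ n - C (p ^ (n - 2) * b ^ (n - 1)), monic_X_pow_sub_C _ hn0, ?_⟩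
    show aeval η (X ^ n - C (p ^ (n - 2) * b ^ (n - 1))) = 0
    rw [map_sub, map_pow, aeval_X, aeval_C, hηn]
    simp
  set ξ : 𝓞 K := ⟨η, hηint⟩ with hξdef
  have hkey : (p : 𝓞 K) * ξ = θ ^ (n - 1) := by
    apply NumberField.RingOfIntegers.coe_injective
    push_cast
    show (p : K) * η = (θ : K) ^ (n - 1)
    rw [hηdef]
    field_simp
  -- write ξ as a polynomial in θ of degree < n
  obtain ⟨f, hf⟩ : ∃ f : ℤ[X], aeval θ f = ξ := by
    have : ξ ∈ Algebra.adjoin ℤ {θ} := hmono ▸ Algebra.mem_top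
    rwa [Algebra.adjoin_singleton_eq_range_aeval] at this
  set r : ℤ[X] := f %ₘ (X ^ n - C a) with hrdef
  have hrθ : aeval θ r = ξ := by
    have h2 := congrArg (aeval θ) (modByMonic_add_div f (X ^ n - C a))
    rw [map_add, map_mul, haev, zero_mul, add_zero] at h2
    rw [hrdef, h2, hf]
  -- the polynomial C p * r - X ^ (n - 1) kills θ and has degree < n, hence is zero
  have hgθ : aeval θ (C p * r - X ^ (n - 1) : ℤ[X]) = 0 := by
    simp [hrθ, hkey]
  have hgdvd : minpoly ℤ θ ∣ (C p * r - X ^ (n - 1) : ℤ[X]) :=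
    minpoly.isIntegrallyClosed_dvd hθint hgθ
  have hdegr : r.degree < n := by
    have h3 := degree_modByMonic_lt f hmonic
    rwa [degree_X_pow_sub_C hn1 a] at h3
  have hdeg : (C p * r - X ^ (n - 1) : ℤ[X]).degree < (n : ℕ) := by
    apply lt_of_le_of_lt (degree_sub_le _ _)
    apply max_lt
    · exact lt_of_le_of_lt (degree_mul_le _ _)
        (lt_of_le_of_lt (add_le_add degree_C_le le_rfl) (by simpa using hdegr))
    · rw [degree_X_pow]
      exact_mod_cast Nat.sub_lt hn1 one_pos
  have hg0 : (C p * r - X ^ (n - 1) : ℤ[X]) = 0 := by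
    apply eq_zero_of_dvd_of_degree_lt hgdvd
    rwa [hminpoly, degree_X_pow_sub_C hn1]
  -- compare coefficients at n - 1 : p * r.coeff (n-1) = 1, so p is a unit, contradiction
  have := congrArg (fun q : ℤ[X] => q.coeff (n - 1)) hg0
  simp [coeff_sub, coeff_C_mul] at this
  exact hp.not_isUnit (IsUnit.of_mul_eq_one _ (by linarith))
end
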